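/- Let W₁ and W₂ be regularized wavelet sets and let Ω := {x ∈ [0,1) : h̃_{W₁}(x) = h̃_{W₂}(x)}. Then, up to μ-null sets, W₁ ∩ W₂ = (δ|_{W₁})^{-1}(ξ^{-1}(Ω)) = (δ|_{W₂})^{-1}(ξ^{-1}(Ω)). -/

import Mathlib

open MeasureTheory Set Real Filter
open scoped symmDiff Classical

noncomputable section

/-- The Littlewood–Paley set `E = [-2π,-π) ∪ [π,2π)`. -/
def E : Set ℝ := Ico (-(2*π)) (-π) ∪ Ico π (2*π)

/-- `tau x = x + 2jπ`, where `j` is the unique integer with `x + 2jπ ∈ E`. -/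
def tau (x : ℝ) : ℝ :=
  if x - 2*π*(⌊x/(2*π)⌋ : ℝ) < π then x - 2*π*(⌊x/(2*π)⌋ : ℝ) - 2*π
  else x - 2*π*(⌊x/(2*π)⌋ : ℝ)

/-- `delta x = 2^k x`, where (for `x ≠ 0`) `k` is the unique integer with `2^k x ∈ E`. -/
def delta (x : ℝ) : ℝ :=
  if 0 < x then (2:ℝ)^(⌈Real.logb 2 (π/x)⌉) * x
  else (2:ℝ)^(⌊Real.logb 2 (2*π/(-x))⌋) * x

/-- The map `ξ : E → [0,1)`. -/
def xiMap (x : ℝ) : ℝ := if x < 0 then x/(2*π) + 1 else x/(2*π)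

/-- The inverse `ξ⁻¹ : [0,1) → E`. -/
def xiInv (y : ℝ) : ℝ := if y < 1/2 then 2*π*(y-1) else 2*π*y

/-- The translates `{W + 2kπ}_{k ∈ ℤ}` form a partition of `ℝ`. -/
def TransPartition (W : Set ℝ) : Prop :=
  (⋃ k : ℤ, (fun x : ℝ => x + 2*π*(k:ℝ)) '' W) = univ ∧
  Pairwise fun k l : ℤ =>
    Disjoint ((fun x : ℝ => x + 2*π*(k:ℝ)) '' W) ((fun x : ℝ => x + 2*π*(l:ℝ)) '' W)

/-- The dilates `{2^k W}_{k ∈ ℤ}` form a partition of `ℝ \ {0}`. -/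
def DilPartition (W : Set ℝ) : Prop :=
  (⋃ k : ℤ, (fun x : ℝ => (2:ℝ)^k * x) '' W) = {(0:ℝ)}ᶜ ∧
  Pairwise fun k l : ℤ =>
    Disjoint ((fun x : ℝ => (2:ℝ)^k * x) '' W) ((fun x : ℝ => (2:ℝ)^l * x) '' W)

/-- A regularized wavelet set. -/
def IsRegularizedWaveletSet (W : Set ℝ) : Prop :=
  MeasurableSet W ∧ TransPartition W ∧ DilPartition W

/-- The wavelet induced isomorphism `h̃_W = ξ ∘ τ|_W ∘ (δ|_W)⁻¹ ∘ ξ⁻¹` of `[0,1)`. -/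
def hIso (W : Set ℝ) : ℝ → ℝ :=
  fun t => xiMap (tau (Function.invFunOn delta W (xiInv t)))

/-- The class of wavelet induced maps of `[0,1)` (Proposition 2.3 (i)-(ii)). -/
def IsWaveletInduced (h : ℝ → ℝ) : Prop :=
  Set.BijOn h (Ico (0:ℝ) 1) (Ico (0:ℝ) 1) ∧
  Measurable ((Ico (0:ℝ) 1).restrict h) ∧
  ∃ A B : ℤ → Set ℝ,
    (∀ k, MeasurableSet (A k)) ∧ (∀ k, MeasurableSet (B k)) ∧
    (⋃ k, A k) = Ico (1/2 : ℝ) 1 ∧ Pairwise (Function.onFun Disjoint A) ∧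
    (⋃ k, B k) = Ico (0:ℝ) (1/2) ∧ Pairwise (Function.onFun Disjoint B) ∧
    (∀ k, ∀ x ∈ A k, h x = Int.fract ((2:ℝ)^k * x)) ∧
    (∀ k, ∀ x ∈ B k, h x = Int.fract ((2:ℝ)^k * (x - 1)))

/-- The class `WI₁`. -/
def MemWI1 (f : ℝ → ℝ) : Prop :=
  ∃ A B : ℕ → Set ℝ,
    (∀ k, MeasurableSet (A k)) ∧ (∀ k, MeasurableSet (B k)) ∧
    (⋃ k, A k) = Ico (1/2 : ℝ) 1 ∧ Pairwise (Function.onFun Disjoint A) ∧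
    (⋃ k, B k) = Ico (0:ℝ) (1/2) ∧ Pairwise (Function.onFun Disjoint B) ∧
    (∀ k, ∀ x ∈ A k, f x = x / 2^(k+1)) ∧
    (∀ k, ∀ x ∈ B k, f x = (x - 1) / 2^(k+1) + 1)

/-- The class `WI₂`. -/
def MemWI2 (g : ℝ → ℝ) : Prop :=
  Measurable ((Ico (0:ℝ) 1).restrict g) ∧
  Set.MapsTo g (Ico (0:ℝ) 1) (Ico (0:ℝ) 1) ∧
  Set.InjOn g (Ico (0:ℝ) 1) ∧
  ∀ x ∈ Ico (0:ℝ) 1, ∃ k l : ℕ, g x = (x + l) / 2^k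

/-- The Schröder–Cantor–Bernstein map `u ⋄ v` for injections between arbitrary types. -/
def scb {α β : Type*} (u : α → β) (v : β → α) : α → β :=
  fun x =>
    if x ∈ ⋃ k : ℕ, (v ∘ u)^[k] '' (Set.range v)ᶜ then u x
    else if h2 : x ∈ Set.range v then Classical.choose h2
    else u x

/-- The Schröder–Cantor–Bernstein map `u ⋄ v` for maps of `[0,1)`. -/
def scbOn (u v : ℝ → ℝ) : ℝ → ℝ :=
  fun x =>
    if x ∈ ⋃ k : ℕ, (v ∘ u)^[k] '' (Ico (0:ℝ) 1 \ v '' (Ico (0:ℝ) 1)) then u x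
    else Function.invFunOn v (Ico (0:ℝ) 1) x

/-- The metric `d` on wavelet sets. -/
def dws (W₁ W₂ : Set ℝ) : ℝ :=
  Real.sqrt (volume (W₁ ∆ W₂)).toReal + Real.sqrt (∫ x in W₁ ∆ W₂, |x|⁻¹)

/-- The measure `ν` on `[0,1)` with density `(1-x)⁻¹` on `[0,1/2)` and `x⁻¹` on `[1/2,1)`. -/
def nuMeasure : Measure ℝ :=
  volume.withDensity (fun x =>
    ENNReal.ofReal (if x ∈ Ico (0:ℝ) (1/2) then (1-x)⁻¹
      else if x ∈ Ico (1/2:ℝ) 1 then x⁻¹ else 0))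



-- ===== Auxiliary lemmas =====

lemma delta_spec (x : ℝ) : ∃ k : ℤ, delta x = (2:ℝ)^k * x := by
  unfold delta; split_ifs <;> exact ⟨_, rfl⟩

lemma zpow_between {j : ℤ} (h1 : (1:ℝ)/2 < 2^j) (h2 : (2:ℝ)^j < 2) : j = 0 := by
  have hm := zpow_right_strictMono₀ (one_lt_two : (1:ℝ) < 2)
  have l1 : j < 1 := by
    have := hm.lt_iff_lt (a := j) (b := 1)
    rw [← this]; simpa using h2
  have l2 : (-1 : ℤ) < j := by
    have := hm.lt_iff_lt (a := (-1:ℤ)) (b := j)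
    rw [← this]; simp only [zpow_neg_one]; norm_num at h1 ⊢; linarith
  omega

lemma delta_mem_E {x : ℝ} (hx : x ≠ 0) : delta x ∈ E := by
  rcases hx.lt_or_gt with hneg | hpos
  · have hy : 0 < -x := by linarith
    have h2pi : (0:ℝ) < 2*π := by positivity
    have hq : 0 < 2*π/(-x) := by positivity
    set k := ⌊Real.logb 2 (2*π/(-x))⌋ with hk
    have hrw : (2:ℝ) ^ (Real.logb 2 (2*π/(-x))) = 2*π/(-x) :=
      Real.rpow_logb (by norm_num) (by norm_num) hq
    have hle : (2:ℝ)^k ≤ 2*π/(-x) := by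
      have : (2:ℝ) ^ ((k:ℝ)) ≤ (2:ℝ) ^ (Real.logb 2 (2*π/(-x))) :=
        Real.rpow_le_rpow_of_exponent_le (by norm_num) (Int.floor_le _)
      rwa [Real.rpow_intCast, hrw] at this
    have hgt : 2*π/(-x) < (2:ℝ)^k * 2 := by
      have h1 : Real.logb 2 (2*π/(-x)) < (k:ℝ) + 1 := Int.lt_floor_add_one _
      have : (2:ℝ) ^ (Real.logb 2 (2*π/(-x))) < (2:ℝ) ^ ((k:ℝ)+1) :=
        Real.rpow_lt_rpow_of_exponent_lt (by norm_num) h1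
      rw [hrw, Real.rpow_add (by norm_num), Real.rpow_intCast, Real.rpow_one] at this
      exact this
    have hd : delta x = (2:ℝ)^k * x := by
      unfold delta; rw [if_neg (by linarith)]
    rw [hd]
    left
    constructor
    · have hcan : 2*π/(-x) * (-x) = 2*π := div_mul_cancel₀ _ hy.ne'
      have : (2:ℝ)^k * (-x) ≤ 2*π := by
        nlinarith [mul_le_mul_of_nonneg_right hle hy.le]
      nlinarith
    · have : π < (2:ℝ)^k * (-x) := by
        rw [div_lt_iff₀ hy] at hgt
        nlinarith
      nlinarith
  · have hq : 0 < π/x := by positivity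
    set k := ⌈Real.logb 2 (π/x)⌉ with hk
    have hrw : (2:ℝ) ^ (Real.logb 2 (π/x)) = π/x :=
      Real.rpow_logb (by norm_num) (by norm_num) hq
    have hge : π/x ≤ (2:ℝ)^k := by
      have : (2:ℝ) ^ (Real.logb 2 (π/x)) ≤ (2:ℝ) ^ ((k:ℝ)) :=
        Real.rpow_le_rpow_of_exponent_le (by norm_num) (Int.le_ceil _)
      rwa [Real.rpow_intCast, hrw] at this
    have hlt : (2:ℝ)^k < (π/x) * 2 := by
      have h1 : (k:ℝ) < Real.logb 2 (π/x) + 1 := by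
        exact_mod_cast Int.ceil_lt_add_one _
      have : (2:ℝ) ^ ((k:ℝ)) < (2:ℝ) ^ (Real.logb 2 (π/x) + 1) :=
        Real.rpow_lt_rpow_of_exponent_lt (by norm_num) h1
      rwa [Real.rpow_add (by norm_num), Real.rpow_intCast, Real.rpow_one, hrw] at this
    have hd : delta x = (2:ℝ)^k * x := by
      unfold delta; rw [if_pos hpos]
    rw [hd]
    right
    constructor
    · rw [div_le_iff₀ hpos] at hge; nlinarith
    · rw [div_mul_eq_mul_div, lt_div_iff₀ hpos] at hlt; nlinarith

lemma E_dyadic {e : ℝ} (he : e ∈ E) {j : ℤ} (hj : (2:ℝ)^j * e ∈ E) : j = 0 := by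
  have hπ : 0 < π := Real.pi_pos
  have hp : (0:ℝ) < 2^j := by positivity
  rcases he with ⟨h1, h2⟩ | ⟨h1, h2⟩
  · have hen : e < 0 := by linarith
    have hjn : (2:ℝ)^j * e < 0 := by nlinarith
    rcases hj with ⟨g1, g2⟩ | ⟨g1, g2⟩
    · apply zpow_between
      · nlinarith
      · nlinarith
    · exfalso; nlinarith
  · have hep : 0 < e := by linarith
    have hjp : 0 < (2:ℝ)^j * e := by positivity
    rcases hj with ⟨g1, g2⟩ | ⟨g1, g2⟩
    · exfalso; nlinarith
    · apply zpow_between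
      · nlinarith
      · nlinarith

lemma r_bounds (x : ℝ) : 0 ≤ x - 2*π*(⌊x/(2*π)⌋ : ℝ) ∧ x - 2*π*(⌊x/(2*π)⌋ : ℝ) < 2*π := by
  have h2pi : (0:ℝ) < 2*π := by positivity
  have h1 : (⌊x/(2*π)⌋ : ℝ) ≤ x/(2*π) := Int.floor_le _
  have h2 : x/(2*π) < (⌊x/(2*π)⌋ : ℝ) + 1 := Int.lt_floor_add_one _
  have hx : (x/(2*π)) * (2*π) = x := div_mul_cancel₀ _ h2pi.ne'
  constructor <;> nlinarith [mul_le_mul_of_nonneg_right h1 h2pi.le,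
    mul_lt_mul_of_pos_right h2 h2pi]

lemma tau_mem_E (x : ℝ) : tau x ∈ E := by
  obtain ⟨h0, h2⟩ := r_bounds x
  have hπ : 0 < π := Real.pi_pos
  unfold tau
  split_ifs with h
  · left; exact ⟨by linarith, by linarith⟩
  · right; exact ⟨by linarith, by linarith⟩

lemma tau_eq_add (x : ℝ) : ∃ j : ℤ, tau x = x + 2*π*(j:ℝ) := by
  unfold tau
  split_ifs with h
  · exact ⟨-⌊x/(2*π)⌋ - 1, by push_cast; ring⟩
  · exact ⟨-⌊x/(2*π)⌋, by push_cast; ring⟩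

lemma xiMap_mem {e : ℝ} (he : e ∈ E) : xiMap e ∈ Ico (0:ℝ) 1 := by
  have hπ : 0 < π := Real.pi_pos
  have h2pi : (0:ℝ) < 2*π := by positivity
  have hq : (e/(2*π)) * (2*π) = e := div_mul_cancel₀ _ h2pi.ne'
  rcases he with ⟨h1, h2⟩ | ⟨h1, h2⟩
  · have hneg : e < 0 := by linarith
    rw [xiMap, if_pos hneg]
    constructor <;> nlinarith
  · have hpos : ¬ e < 0 := by push_neg; linarith
    rw [xiMap, if_neg hpos]
    constructor <;> nlinarith

lemma xiInv_xiMap {e : ℝ} (he : e ∈ E) : xiInv (xiMap e) = e := by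
  have hπ : 0 < π := Real.pi_pos
  have h2pi : (0:ℝ) < 2*π := by positivity
  have hq : (e/(2*π)) * (2*π) = e := div_mul_cancel₀ _ h2pi.ne'
  rcases he with ⟨h1, h2⟩ | ⟨h1, h2⟩
  · have hneg : e < 0 := by linarith
    rw [xiMap, if_pos hneg, xiInv, if_pos (by nlinarith)]
    field_simp
    ring
  · have hpos : ¬ e < 0 := by push_neg; linarith
    rw [xiMap, if_neg hpos, xiInv, if_neg (by push_neg; nlinarith)]
    field_simp

lemma xiMap_xiInv {t : ℝ} (ht : t ∈ Ico (0:ℝ) 1) : xiMap (xiInv t) = t := by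
  have hπ : 0 < π := Real.pi_pos
  obtain ⟨h0, h1⟩ := ht
  rw [xiInv]
  split_ifs with h
  · rw [xiMap, if_pos (by nlinarith)]
    field_simp
    ring
  · push_neg at h
    rw [xiMap, if_neg (by push_neg; nlinarith)]
    field_simp

lemma zero_not_mem_W {W : Set ℝ} (h : IsRegularizedWaveletSet W) : (0:ℝ) ∉ W := by
  intro h0
  have hU := h.2.2.1
  have hmem : (0:ℝ) ∈ ⋃ k : ℤ, (fun x : ℝ => (2:ℝ)^k * x) '' W :=
    mem_iUnion.2 ⟨0, ⟨0, h0, by norm_num⟩⟩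
  rw [hU] at hmem
  exact hmem rfl

lemma injOn_delta_W {W : Set ℝ} (h : IsRegularizedWaveletSet W) : InjOn delta W := by
  intro a ha b hb hab
  obtain ⟨j, hj⟩ := delta_spec a
  obtain ⟨k, hk⟩ := delta_spec b
  rw [hj, hk] at hab
  by_cases hjk : j = k
  · subst hjk
    exact mul_left_cancel₀ (by positivity) hab
  · exact absurd ((Set.disjoint_left.mp (h.2.2.2 hjk)) ⟨a, ha, rfl⟩) (by
      exact fun hn => hn ⟨b, hb, hab.symm⟩)

lemma delta_surj_W {W : Set ℝ} (h : IsRegularizedWaveletSet W) {e : ℝ} (he : e ∈ E) :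
    ∃ w ∈ W, delta w = e := by
  have hπ : 0 < π := Real.pi_pos
  have he0 : e ≠ 0 := by
    rcases he with ⟨h1, h2⟩ | ⟨h1, h2⟩ <;> intro h0 <;> rw [h0] at h1 h2 <;> linarith
  have hmem : e ∈ ⋃ k : ℤ, (fun x : ℝ => (2:ℝ)^k * x) '' W := by
    rw [h.2.2.1]; exact he0
  obtain ⟨k, w, hw, hke⟩ : ∃ k : ℤ, ∃ w ∈ W, (2:ℝ)^k * w = e := by
    simpa using hmem
  have hw0 : w ≠ 0 := by rintro rfl; apply he0; rw [← hke]; ring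
  obtain ⟨j, hj⟩ := delta_spec w
  have hdE : delta w ∈ E := delta_mem_E hw0
  have hde : delta w = (2:ℝ)^(j-k) * e := by
    rw [hj, ← hke, ← mul_assoc, ← zpow_add₀ (by norm_num : (2:ℝ) ≠ 0)]
    have hjk : j - k + k = j := by omega
    rw [hjk]
  have hjk0 : j - k = 0 := E_dyadic he (hde ▸ hdE)
  refine ⟨w, hw, ?_⟩
  rw [hde, hjk0]
  simp

/-- The countable exceptional set of points with `2^n x = x + 2πm`, `n ≠ 0`. -/
def Bad : Set ℝ := {x : ℝ | ∃ n m : ℤ, n ≠ 0 ∧ (2:ℝ)^n * x = x + 2*π*(m:ℝ)}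

lemma Bad_countable : Bad.Countable := by
  have hsub : Bad ⊆ ⋃ p : ℤ × ℤ, {2*π*((p.2 : ℤ):ℝ) / ((2:ℝ)^(p.1 : ℤ) - 1)} := by
    rintro x ⟨n, m, hn, hx⟩
    refine mem_iUnion.2 ⟨(n, m), ?_⟩
    simp only [mem_singleton_iff]
    have h1 : (2:ℝ)^n ≠ 1 := by
      intro h
      apply hn
      have hinj := zpow_right_injective₀ (by norm_num : (0:ℝ) < 2) (by norm_num : (2:ℝ) ≠ 1)
      exact hinj (by simpa using h)
    have h2 : (2:ℝ)^n - 1 ≠ 0 := sub_ne_zero.mpr h1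
    rw [eq_comm, div_eq_iff h2]
    linear_combination -hx
  exact Set.Countable.mono hsub (countable_iUnion fun p => countable_singleton _)

lemma key_iff {W₁ W₂ : Set ℝ} (h₁ : IsRegularizedWaveletSet W₁)
    (h₂ : IsRegularizedWaveletSet W₂) {x : ℝ} (hx1 : x ∈ W₁) (hxB : x ∉ Bad) :
    (x ∈ W₂ ↔ delta x ∈ xiInv '' {t ∈ Ico (0:ℝ) 1 | hIso W₁ t = hIso W₂ t}) := by
  have hx0 : x ≠ 0 := fun h => zero_not_mem_W h₁ (h ▸ hx1)
  have he : delta x ∈ E := delta_mem_E hx0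
  have ht : xiMap (delta x) ∈ Ico (0:ℝ) 1 := xiMap_mem he
  have hxi : xiInv (xiMap (delta x)) = delta x := xiInv_xiMap he
  obtain ⟨w, hw, hwe⟩ := delta_surj_W h₂ he
  have hx'mem : Function.invFunOn delta W₂ (delta x) ∈ W₂ :=
    Function.invFunOn_mem ⟨w, hw, hwe⟩
  have hx'e : delta (Function.invFunOn delta W₂ (delta x)) = delta x :=
    Function.invFunOn_eq ⟨w, hw, hwe⟩
  set x' := Function.invFunOn delta W₂ (delta x) with hx'def
  have hW1inv : Function.invFunOn delta W₁ (delta x) = x :=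
    (injOn_delta_W h₁).leftInvOn_invFunOn hx1
  have hIso1 : hIso W₁ (xiMap (delta x)) = xiMap (tau x) := by
    unfold hIso; rw [hxi, hW1inv]
  have hIso2 : hIso W₂ (xiMap (delta x)) = xiMap (tau x') := by
    unfold hIso; rw [hxi]
  constructor
  · intro hx2
    have hxx' : x' = x := (injOn_delta_W h₂) hx'mem hx2 hx'e
    exact ⟨xiMap (delta x), ⟨ht, by rw [hIso1, hIso2, hxx']⟩, hxi⟩
  · rintro ⟨s, ⟨hs01, hseq⟩, hse⟩
    have hst : xiMap (delta x) = s := by rw [← hse]; exact xiMap_xiInv hs01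
    rw [← hst] at hseq
    rw [hIso1, hIso2] at hseq
    have htau : tau x = tau x' := by
      have hcong := congrArg xiInv hseq
      rwa [xiInv_xiMap (tau_mem_E x), xiInv_xiMap (tau_mem_E x')] at hcong
    obtain ⟨j₁, hj₁⟩ := tau_eq_add x
    obtain ⟨j₂, hj₂⟩ := tau_eq_add x'
    obtain ⟨k, hk⟩ := delta_spec x
    obtain ⟨k', hk'⟩ := delta_spec x'
    have hkk : (2:ℝ)^k' * x' = (2:ℝ)^k * x := by rw [← hk', ← hk, hx'e]
    have hx'val : x' = (2:ℝ)^(-k'+k) * x := by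
      have hcong := congrArg (fun y => (2:ℝ)^(-k') * y) hkk
      simp only [← mul_assoc, ← zpow_add₀ (by norm_num : (2:ℝ) ≠ 0)] at hcong
      simpa using hcong
    have heq : (2:ℝ)^(-k'+k) * x = x + 2*π*(((j₁ - j₂ : ℤ)):ℝ) := by
      rw [← hx'val]
      have hx'eq : x + 2*π*(j₁:ℝ) = x' + 2*π*(j₂:ℝ) := by rw [← hj₁, ← hj₂, htau]
      push_cast
      linarith
    by_cases hn : (-k'+k : ℤ) = 0
    · rw [hn, zpow_zero, one_mul] at hx'val
      rwa [hx'val] at hx'mem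
    · exact absurd ⟨_, _, hn, heq⟩ hxB

/-- For regularized wavelet sets `W₁, W₂` and
`Ω = {x ∈ [0,1) : h̃_{W₁}(x) = h̃_{W₂}(x)}`, up to null sets
`W₁ ∩ W₂ = (δ|_{W₁})⁻¹(ξ⁻¹(Ω)) = (δ|_{W₂})⁻¹(ξ⁻¹(Ω))`. -/
theorem inter_eq_deltaInv_xiInv_hIso_agreement (W₁ W₂ : Set ℝ)
    (h₁ : IsRegularizedWaveletSet W₁) (h₂ : IsRegularizedWaveletSet W₂) :
    volume ((W₁ ∩ W₂) ∆
      (W₁ ∩ delta ⁻¹' (xiInv '' {x ∈ Ico (0:ℝ) 1 | hIso W₁ x = hIso W₂ x}))) = 0 ∧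
    volume ((W₁ ∩ W₂) ∆
      (W₂ ∩ delta ⁻¹' (xiInv '' {x ∈ Ico (0:ℝ) 1 | hIso W₁ x = hIso W₂ x}))) = 0 := by
  have hswap : {t ∈ Ico (0:ℝ) 1 | hIso W₂ t = hIso W₁ t}
      = {t ∈ Ico (0:ℝ) 1 | hIso W₁ t = hIso W₂ t} := by
    ext t; exact ⟨fun ⟨a, b⟩ => ⟨a, b.symm⟩, fun ⟨a, b⟩ => ⟨a, b.symm⟩⟩
  have hBad : volume Bad = 0 := Bad_countable.measure_zero volume
  constructor
  · apply measure_mono_null _ hBad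
    intro x hx
    by_contra hxB
    rcases Set.mem_symmDiff.mp hx with ⟨⟨hx1, hx2⟩, hns⟩ | ⟨⟨hx1, hs⟩, hns⟩
    · exact hns ⟨hx1, (key_iff h₁ h₂ hx1 hxB).mp hx2⟩
    · exact hns ⟨hx1, (key_iff h₁ h₂ hx1 hxB).mpr hs⟩
  · apply measure_mono_null _ hBad
    intro x hx
    by_contra hxB
    rcases Set.mem_symmDiff.mp hx with ⟨⟨hx1, hx2⟩, hns⟩ | ⟨⟨hx2, hs⟩, hns⟩
    · have k2 := key_iff h₂ h₁ hx2 hxB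
      rw [hswap] at k2
      exact hns ⟨hx2, k2.mp hx1⟩
    · have k2 := key_iff h₂ h₁ hx2 hxB
      rw [hswap] at k2
      exact hns ⟨k2.mpr hs, hx2⟩

end
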